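/- For every integer n ≥ 1 and every real ρ ≥ 1, the partial exponential sum satisfies ∑_{k=0}^{n-1} (nρ²)^k / k! ≤ (ρ^{2n} e^n / √(2πn)) · 1/(ρ² - 1 + 1/n). -/

import Mathlib

open Finset Real

/-- Stirling lower bound: `√(2πn) (n/e)^n ≤ n!` for `n ≥ 1`. -/
lemma stirling_lower (n : ℕ) (hn : 1 ≤ n) :
    Real.sqrt (2 * Real.pi * n) * ((n : ℝ) / Real.exp 1) ^ n ≤ (Nat.factorial n : ℝ) := by
  have hpi : Real.sqrt Real.pi ≤ Stirling.stirlingSeq n := by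
    obtain ⟨m, rfl⟩ := Nat.exists_eq_add_of_le hn
    have ht : Filter.Tendsto (Stirling.stirlingSeq ∘ Nat.succ) Filter.atTop
        (nhds (Real.sqrt Real.pi)) :=
      Stirling.tendsto_stirlingSeq_sqrt_pi.comp (Filter.tendsto_add_atTop_nat 1)
    have := Stirling.stirlingSeq'_antitone.le_of_tendsto ht m
    simpa [Nat.succ_eq_add_one, Nat.add_comm] using this
  have hpos : (0 : ℝ) < Real.sqrt (2 * n) * ((n : ℝ) / Real.exp 1) ^ n := by
    have hn0 : (0 : ℝ) < n := by exact_mod_cast hn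
    positivity
  have h1 : Real.sqrt Real.pi * (Real.sqrt (2 * n) * ((n : ℝ) / Real.exp 1) ^ n) ≤
      Stirling.stirlingSeq n * (Real.sqrt (2 * n) * ((n : ℝ) / Real.exp 1) ^ n) := by
    exact mul_le_mul_of_nonneg_right hpi hpos.le
  calc Real.sqrt (2 * Real.pi * n) * ((n : ℝ) / Real.exp 1) ^ n
      = Real.sqrt Real.pi * (Real.sqrt (2 * n) * ((n : ℝ) / Real.exp 1) ^ n) := by
        rw [show (2 : ℝ) * Real.pi * n = Real.pi * (2 * n) by ring,
          Real.sqrt_mul Real.pi_pos.le, mul_assoc]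
    _ ≤ Stirling.stirlingSeq n * (Real.sqrt (2 * n) * ((n : ℝ) / Real.exp 1) ^ n) := h1
    _ = (Nat.factorial n : ℝ) := by
        rw [Stirling.stirlingSeq]
        field_simp

/-- Key algebraic inequality via telescoping. -/
lemma key_sum (n : ℕ) (hn : 1 ≤ n) (u : ℝ) (hu : 1 ≤ u) :
    (∑ k ∈ Finset.range n, ((n : ℝ) * u) ^ k / (Nat.factorial k)) * (u - 1 + 1 / n) ≤
      ((n : ℝ) * u) ^ n / Nat.factorial n := by
  have hn0 : (0 : ℝ) < n := by exact_mod_cast hn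
  set f : ℕ → ℝ := fun k => ((n : ℝ) * u) ^ k / (Nat.factorial k) * k / n with hf
  have htel : ∑ k ∈ Finset.range n, (f (k + 1) - f k) = f n - f 0 :=
    Finset.sum_range_sub f n
  have hstep : ∀ k, ((n : ℝ) * u) ^ k / (Nat.factorial k) * (u - k / n)
      = f (k + 1) - f k := by
    intro k
    have hfact : (Nat.factorial (k + 1) : ℝ) = (k + 1) * Nat.factorial k := by
      push_cast [Nat.factorial_succ]; ring
    have hfk : (0 : ℝ) < Nat.factorial k := by positivity
    simp only [hf, hfact, pow_succ]
    field_simp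
    push_cast
    ring
  have hsum_eq : ∑ k ∈ Finset.range n, ((n : ℝ) * u) ^ k / (Nat.factorial k) * (u - k / n)
      = ((n : ℝ) * u) ^ n / Nat.factorial n := by
    rw [Finset.sum_congr rfl fun k _ => hstep k, htel]
    simp only [hf]
    field_simp
    ring
  rw [Finset.sum_mul, ← hsum_eq]
  apply Finset.sum_le_sum
  intro k hk
  have hk' : (k : ℝ) ≤ (n : ℝ) - 1 := by
    have : k + 1 ≤ n := Finset.mem_range.mp hk
    have : (k : ℝ) + 1 ≤ n := by exact_mod_cast this
    linarith
  have ht : (0 : ℝ) ≤ ((n : ℝ) * u) ^ k / (Nat.factorial k) := by positivity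
  apply mul_le_mul_of_nonneg_left _ ht
  have : (k : ℝ) / n ≤ 1 - 1 / n := by
    rw [div_le_iff₀ hn0]
    field_simp
    linarith
  linarith

theorem stmt_2 (n : ℕ) (hn : 1 ≤ n) (ρ : ℝ) (hρ : 1 ≤ ρ) :
    ∑ k ∈ Finset.range n, ((n : ℝ) * ρ ^ 2) ^ k / (Nat.factorial k) ≤
      ρ ^ (2 * n) * Real.exp n / Real.sqrt (2 * Real.pi * n) *
        (1 / (ρ ^ 2 - 1 + 1 / n)) := by
  have hn0 : (0 : ℝ) < n := by exact_mod_cast hn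
  have hu : (1 : ℝ) ≤ ρ ^ 2 := one_le_pow₀ hρ
  have hd : (0 : ℝ) < ρ ^ 2 - 1 + 1 / n := by
    have : (0 : ℝ) < 1 / n := by positivity
    linarith
  have hS := key_sum n hn (ρ ^ 2) hu
  have h1 : ∑ k ∈ Finset.range n, ((n : ℝ) * ρ ^ 2) ^ k / (Nat.factorial k) ≤
      ((n : ℝ) * ρ ^ 2) ^ n / Nat.factorial n * (1 / (ρ ^ 2 - 1 + 1 / n)) := by
    rw [mul_one_div, le_div_iff₀ hd]
    exact hS
  refine h1.trans ?_
  apply mul_le_mul_of_nonneg_right _ (by positivity)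
  have hst := stirling_lower n hn
  have hexp : Real.exp 1 ^ n = Real.exp n := by
    rw [← Real.exp_nat_mul]; simp
  have hfac : (0 : ℝ) < Nat.factorial n := by positivity
  have hsq : (0 : ℝ) < Real.sqrt (2 * Real.pi * n) := by
    have := Real.pi_pos; positivity
  have hρ2n : ρ ^ (2 * n) = (ρ ^ 2) ^ n := by rw [pow_mul]
  rw [hρ2n, mul_pow, div_le_div_iff₀ hfac hsq]
  have hst' : Real.sqrt (2 * Real.pi * n) * ((n : ℝ) ^ n / Real.exp n) ≤
      (Nat.factorial n : ℝ) := by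
    calc Real.sqrt (2 * Real.pi * n) * ((n : ℝ) ^ n / Real.exp n)
        = Real.sqrt (2 * Real.pi * n) * ((n : ℝ) / Real.exp 1) ^ n := by
          rw [div_pow, hexp]
      _ ≤ (Nat.factorial n : ℝ) := hst
  have hexp_pos : (0 : ℝ) < Real.exp n := Real.exp_pos _
  have hρpow : (0 : ℝ) ≤ (ρ ^ 2) ^ n := by positivity
  calc (n : ℝ) ^ n * (ρ ^ 2) ^ n * Real.sqrt (2 * Real.pi * n)
      = (ρ ^ 2) ^ n * (Real.sqrt (2 * Real.pi * n) * ((n : ℝ) ^ n / Real.exp n)) * Real.exp n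
        := by field_simp
    _ ≤ (ρ ^ 2) ^ n * (Nat.factorial n : ℝ) * Real.exp n := by
        apply mul_le_mul_of_nonneg_right _ hexp_pos.le
        exact mul_le_mul_of_nonneg_left hst' hρpow
    _ = (ρ ^ 2) ^ n * Real.exp n * Nat.factorial n := by ring
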